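/- If an h×h square of boxes is contained in the skew diagram λ/μ (i.e. there exist r, c with (r+a, c+b) ∈ λ/μ for all 0 ≤ a,b < h), then every partition ν with c(λ; μ, ν) ≠ 0 has Durfee size d(ν) ≥ h. -/

import Mathlib

open Finset

namespace SkewHooks

/-- The `i`-th principal hook length of a partition (0-indexed):
the hook length of the box `(i, i)`, or `0` if `(i,i)` is not in the diagram. -/
def hl (l : YoungDiagram) (i : ℕ) : ℕ := l.rowLen i + l.colLen i - (2 * i + 1)

/-- The Durfee size of a partition: the side of the largest square contained in it. -/
def durfee (l : YoungDiagram) : ℕ :=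
  ((Finset.range (l.card + 1)).filter (fun i => (i, i) ∈ l)).card

/-- The set of boxes of the skew diagram `l / m`. -/
def skewCells (l m : YoungDiagram) : Finset (ℕ × ℕ) := l.cells \ m.cells

/-- The first northwest ribbon of a set of boxes: all boxes `(i,j)` such that
`(i-1, j-1)` is not a box of the set. -/
def nw1 (A : Finset (ℕ × ℕ)) : Finset (ℕ × ℕ) :=
  A.filter (fun c => c.1 = 0 ∨ c.2 = 0 ∨ (c.1 - 1, c.2 - 1) ∉ A)

/-- The set of boxes remaining after removing the first `k` northwest ribbons. -/
def nwRest (A : Finset (ℕ × ℕ)) : ℕ → Finset (ℕ × ℕ)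
  | 0 => A
  | k + 1 => nwRest A k \ nw1 (nwRest A k)

/-- The `(k+1)`-st northwest ribbon (0-indexed `k`). -/
def nw (A : Finset (ℕ × ℕ)) (k : ℕ) : Finset (ℕ × ℕ) := nw1 (nwRest A k)

/-- The northwest ribbon length partition: `pinw A k = |nw_{k+1}(A)|` (0-indexed). -/
def pinw (A : Finset (ℕ × ℕ)) (k : ℕ) : ℕ := (nw A k).card

/-- `T` is a Littlewood-Richardson filling of the set of boxes `D` with content `ν`:
a semistandard filling (weakly increasing rows, strictly increasing columns) with
positive entries, `ν k` entries equal to `k+1`, whose reverse reading word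
(right to left, top to bottom) is a lattice word, and which is `0` outside `D`. -/
def IsLRFilling (D : Finset (ℕ × ℕ)) (ν : YoungDiagram) (T : ℕ × ℕ → ℕ) : Prop :=
  (∀ c, c ∉ D → T c = 0) ∧
  (∀ c ∈ D, 1 ≤ T c) ∧
  (∀ i j, (i, j) ∈ D → (i, j + 1) ∈ D → T (i, j) ≤ T (i, j + 1)) ∧
  (∀ i j, (i, j) ∈ D → (i + 1, j) ∈ D → T (i, j) < T (i + 1, j)) ∧
  (∀ k, (D.filter (fun c => T c = k + 1)).card = ν.rowLen k) ∧
  (∀ i j k, (D.filter (fun c => (c.1 < i ∨ (c.1 = i ∧ j ≤ c.2)) ∧ T c = k + 2)).card ≤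
    (D.filter (fun c => (c.1 < i ∨ (c.1 = i ∧ j ≤ c.2)) ∧ T c = k + 1)).card)

/-- The coefficient of `[ν]` in the skew character of the set of boxes `D`:
the number of LR fillings of `D` with content `ν`. -/
noncomputable def skewCoeff (D : Finset (ℕ × ℕ)) (ν : YoungDiagram) : ℕ :=
  Set.ncard {T : ℕ × ℕ → ℕ | IsLRFilling D ν T}

/-- The Littlewood-Richardson coefficient `c(l; m, ν)`:
the number of LR tableaux of shape `l / m` and content `ν`. -/
noncomputable def lr (l m ν : YoungDiagram) : ℕ := skewCoeff (skewCells l m) ν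

/-- Lexicographic order on sequences: `f ≤lex g`. -/
def lexLE (f g : ℕ → ℕ) : Prop :=
  f = g ∨ ∃ i, f i < g i ∧ ∀ j < i, f j = g j

/-- A set of boxes decomposes if it splits into two nonempty pieces sharing
no row and no column. -/
def Decomposes (A : Finset (ℕ × ℕ)) : Prop :=
  ∃ B C : Finset (ℕ × ℕ), B ∪ C = A ∧ B.Nonempty ∧ C.Nonempty ∧
    ∀ b ∈ B, ∀ c ∈ C, b.1 ≠ c.1 ∧ b.2 ≠ c.2

/-- A set of boxes is connected if it is nonempty and does not decompose. -/
def Connected (A : Finset (ℕ × ℕ)) : Prop := A.Nonempty ∧ ¬ Decomposes A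

/-- count of entries equal to `m` in rows `< i`. -/
def Ncnt (D : Finset (ℕ × ℕ)) (T : ℕ × ℕ → ℕ) (i m : ℕ) : ℕ :=
  (D.filter (fun c => c.1 < i ∧ T c = m)).card

lemma skew_between {lam mu : YoungDiagram} {i j j' j'' : ℕ}
    (h1 : (i, j) ∈ skewCells lam mu) (h2 : (i, j') ∈ skewCells lam mu)
    (hle : j ≤ j'') (hle' : j'' ≤ j') : (i, j'') ∈ skewCells lam mu := by
  simp only [skewCells, Finset.mem_sdiff, YoungDiagram.mem_cells] at *
  exact ⟨lam.up_left_mem le_rfl hle' h2.1, fun hm => h1.2 (mu.up_left_mem le_rfl hle hm)⟩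

lemma row_mono_aux {lam mu : YoungDiagram} {ν : YoungDiagram} {T : ℕ × ℕ → ℕ}
    (hT : IsLRFilling (skewCells lam mu) ν T) :
    ∀ (d i j : ℕ), (i, j) ∈ skewCells lam mu → (i, j + d) ∈ skewCells lam mu →
      T (i, j) ≤ T (i, j + d) := by
  intro d
  induction d with
  | zero => intro i j _ _; exact le_rfl
  | succ d ih =>
    intro i j h1 h2
    have hmid : (i, j + d) ∈ skewCells lam mu :=
      skew_between h1 h2 (Nat.le_add_right _ _) (by omega)
    exact le_trans (ih i j h1 hmid) (hT.2.2.1 i (j + d) hmid h2)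

lemma row_mono {lam mu : YoungDiagram} {ν : YoungDiagram} {T : ℕ × ℕ → ℕ}
    (hT : IsLRFilling (skewCells lam mu) ν T) {i j j' : ℕ} (hle : j ≤ j')
    (h1 : (i, j) ∈ skewCells lam mu) (h2 : (i, j') ∈ skewCells lam mu) :
    T (i, j) ≤ T (i, j') := by
  obtain ⟨d, rfl⟩ : ∃ d, j' = j + d := ⟨j' - j, by omega⟩
  exact row_mono_aux hT d i j h1 h2

lemma key_step {lam mu : YoungDiagram} {ν : YoungDiagram} {T : ℕ × ℕ → ℕ}
    (hT : IsLRFilling (skewCells lam mu) ν T) (i m : ℕ) (hm : 1 ≤ m) :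
    Ncnt (skewCells lam mu) T (i + 1) (m + 1) ≤ Ncnt (skewCells lam mu) T i m := by
  obtain ⟨k, rfl⟩ : ∃ k, m = k + 1 := ⟨m - 1, by omega⟩
  set D := skewCells lam mu with hD
  by_cases hrow : ((D.filter (fun x => x.1 = i ∧ T x = k + 2))).Nonempty
  · obtain ⟨x0, hx0, hmin⟩ := Finset.exists_min_image _ Prod.snd hrow
    rw [Finset.mem_filter] at hx0
    have hlat := hT.2.2.2.2.2 i x0.2 k
    refine le_trans (le_trans (Finset.card_le_card ?_) hlat) (Finset.card_le_card ?_)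
    · intro x hx
      rw [Finset.mem_filter] at hx ⊢
      refine ⟨hx.1, ?_, hx.2.2⟩
      rcases Nat.lt_succ_iff_lt_or_eq.mp hx.2.1 with h | h
      · exact Or.inl h
      · exact Or.inr ⟨h, hmin x (Finset.mem_filter.mpr ⟨hx.1, h, hx.2.2⟩)⟩
    · intro x hx
      rw [Finset.mem_filter] at hx ⊢
      refine ⟨hx.1, ?_, hx.2.2⟩
      rcases hx.2.1 with h | ⟨hxi, hxj⟩
      · exact h
      · exfalso
        have hx0' : (i, x0.2) ∈ D := by
          have := hx0.1; rwa [show (i, x0.2) = x0 from by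
            rw [← hx0.2.1]] 
        have hx' : (i, x.2) ∈ D := by
          have := hx.1; rwa [show (i, x.2) = x from by rw [← hxi]]
        have := row_mono hT hxj hx0' hx'
        have e0 : T (i, x0.2) = k + 2 := by
          rw [show (i, x0.2) = x0 from by rw [← hx0.2.1]]; exact hx0.2.2
        have e1 : T (i, x.2) = k + 1 := by
          rw [show (i, x.2) = x from by rw [← hxi]]; exact hx.2.2
        omega
  · have hJ : ∀ x ∈ D, x.2 ≤ D.sup Prod.snd := fun x hx => Finset.le_sup hx
    have hlat := hT.2.2.2.2.2 i (D.sup Prod.snd + 1) k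
    refine le_trans (le_trans (Finset.card_le_card ?_) hlat) (Finset.card_le_card ?_)
    · intro x hx
      rw [Finset.mem_filter] at hx ⊢
      refine ⟨hx.1, ?_, hx.2.2⟩
      rcases Nat.lt_succ_iff_lt_or_eq.mp hx.2.1 with h | h
      · exact Or.inl h
      · exact (hrow ⟨x, Finset.mem_filter.mpr ⟨hx.1, h, hx.2.2⟩⟩).elim
    · intro x hx
      rw [Finset.mem_filter] at hx ⊢
      refine ⟨hx.1, ?_, hx.2.2⟩
      rcases hx.2.1 with h | ⟨_, hxj⟩
      · exact h
      · exact absurd (hJ x hx.1) (by omega)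

lemma sq_lower {lam mu : YoungDiagram} {ν : YoungDiagram} {T : ℕ × ℕ → ℕ} {r c h : ℕ}
    (hT : IsLRFilling (skewCells lam mu) ν T)
    (hsq : ∀ a < h, ∀ b < h, (r + a, c + b) ∈ skewCells lam mu) :
    ∀ a < h, ∀ b < h, a + 1 ≤ T (r + a, c + b) := by
  intro a
  induction a with
  | zero => intro ha b hb; exact hT.2.1 _ (hsq 0 ha b hb)
  | succ a ih =>
    intro ha b hb
    have h1 := hsq a (by omega) b hb
    have h2 := hsq (a + 1) ha b hb
    have hc := hT.2.2.2.1 (r + a) (c + b) h1 (by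
      rw [show r + a + 1 = r + (a + 1) from by omega]; exact h2)
    have := ih (by omega) b hb
    rw [show r + (a + 1) = r + a + 1 from by omega]
    omega

theorem stmt16' (lam mu : YoungDiagram) (h : ℕ)
    (hsq : ∃ r c : ℕ, ∀ a < h, ∀ b < h, (r + a, c + b) ∈ skewCells lam mu)
    (ν : YoungDiagram) (T : ℕ × ℕ → ℕ) (hT : IsLRFilling (skewCells lam mu) ν T) :
    h ≤ ν.rowLen (h - 1) := by
  rcases Nat.eq_zero_or_pos h with rfl | hpos
  · exact Nat.zero_le _
  obtain ⟨r, c, hsq⟩ := hsq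
  set D := skewCells lam mu with hD
  have hlow := sq_lower hT hsq
  set R := r + h - 1 with hR
  have hR1 : R = r + (h - 1) := by omega
  have hR2 : R + 1 = r + h := by omega
  -- each square cell of the bottom row is in D
  have hbot : ∀ b < h, (R, c + b) ∈ D := fun b hb => by
    rw [hR1]; exact hsq (h - 1) (by omega) b hb
  have hbotlow : ∀ b < h, h ≤ T (R, c + b) := fun b hb => by
    have := hlow (h - 1) (by omega) b hb
    rw [hR1]; omega
  -- counting functions
  set F : ℕ → ℕ := fun m => ((range h).filter (fun b => m ≤ T (R, c + b))).card with hF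
  set C : ℕ → ℕ := fun m => ((range h).filter (fun b => T (R, c + b) = m)).card with hC
  -- row addition
  have hrowadd : ∀ m, Ncnt D T R m + C m ≤ Ncnt D T (R + 1) m := by
    intro m
    have hinj : Set.InjOn (fun b => ((R, c + b) : ℕ × ℕ))
        ((range h).filter (fun b => T (R, c + b) = m)) := by
      intro x _ y _ hxy
      simpa using hxy
    have hcard : (((range h).filter (fun b => T (R, c + b) = m)).image
        (fun b => ((R, c + b) : ℕ × ℕ))).card = C m :=
      Finset.card_image_of_injOn hinj
    have hsub : (D.filter (fun x => x.1 < R ∧ T x = m)) ∪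
        (((range h).filter (fun b => T (R, c + b) = m)).image (fun b => ((R, c + b) : ℕ × ℕ)))
        ⊆ D.filter (fun x => x.1 < R + 1 ∧ T x = m) := by
      intro x hx
      rcases Finset.mem_union.mp hx with hx | hx
      · rw [Finset.mem_filter] at hx ⊢
        exact ⟨hx.1, by omega, hx.2.2⟩
      · obtain ⟨b, hb, rfl⟩ := Finset.mem_image.mp hx
        rw [Finset.mem_filter] at hb
        rw [Finset.mem_filter]
        exact ⟨hbot b (Finset.mem_range.mp hb.1), by omega, hb.2⟩
    have hdisj : Disjoint (D.filter (fun x => x.1 < R ∧ T x = m))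
        (((range h).filter (fun b => T (R, c + b) = m)).image (fun b => ((R, c + b) : ℕ × ℕ))) := by
      rw [Finset.disjoint_left]
      intro x hx hx'
      obtain ⟨b, _, rfl⟩ := Finset.mem_image.mp hx'
      rw [Finset.mem_filter] at hx
      omega
    calc Ncnt D T R m + C m
        = ((D.filter (fun x => x.1 < R ∧ T x = m)) ∪
          (((range h).filter (fun b => T (R, c + b) = m)).image
            (fun b => ((R, c + b) : ℕ × ℕ)))).card := by
          rw [Finset.card_union_of_disjoint hdisj, hcard]; rfl
      _ ≤ _ := Finset.card_le_card hsub
  -- split F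
  have hFsplit : ∀ m, F m ≤ C m + F (m + 1) := by
    intro m
    refine le_trans (Finset.card_le_card ?_) (Finset.card_union_le _ _)
    intro b hb
    rw [Finset.mem_filter] at hb
    rw [Finset.mem_union, Finset.mem_filter, Finset.mem_filter]
    rcases eq_or_lt_of_le hb.2 with he | hlt
    · exact Or.inl ⟨hb.1, he.symm⟩
    · exact Or.inr ⟨hb.1, hlt⟩
  -- the bound M
  set M := D.sup T + 1 + h with hM
  have hFM : F M = 0 := by
    rw [hF]
    simp only [Finset.card_eq_zero]
    rw [Finset.filter_eq_empty_iff]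
    intro b hb
    have : T (R, c + b) ≤ D.sup T := Finset.le_sup (hbot b (Finset.mem_range.mp hb))
    omega
  have main : ∀ t, t ≤ M - h → F (M - t) ≤ Ncnt D T (R + 1) (M - t) := by
    intro t
    induction t with
    | zero => intro _; simpa [hFM] using Nat.zero_le _
    | succ t ih =>
      intro ht
      have hMh : h ≤ M := by omega
      have hm1 : M - (t + 1) + 1 = M - t := by omega
      have hmh : h ≤ M - (t + 1) := by omega
      calc F (M - (t + 1)) ≤ C (M - (t + 1)) + F (M - (t + 1) + 1) := hFsplit _
        _ ≤ C (M - (t + 1)) + Ncnt D T (R + 1) (M - (t + 1) + 1) := by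
            rw [hm1]; exact Nat.add_le_add_left (ih (by omega)) _
        _ ≤ C (M - (t + 1)) + Ncnt D T R (M - (t + 1)) := by
            refine Nat.add_le_add_left ?_ _
            have := key_step hT R (M - (t + 1)) (by omega)

            exact this
        _ ≤ Ncnt D T (R + 1) (M - (t + 1)) := by rw [Nat.add_comm]; exact hrowadd _
  have hfin := main (M - h) (le_refl _)
  have hMh : M - (M - h) = h := by omega
  rw [hMh] at hfin
  have hFh : F h = h := by
    show ((range h).filter (fun b => h ≤ T (R, c + b))).card = h
    have : (range h).filter (fun b => h ≤ T (R, c + b)) = range h := by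
      rw [Finset.filter_eq_self]
      intro b hb
      exact hbotlow b (Finset.mem_range.mp hb)
    rw [this, Finset.card_range]
  -- conclude
  have hcount := hT.2.2.2.2.1 (h - 1)
  have hsub : D.filter (fun x => x.1 < R + 1 ∧ T x = h) ⊆
      D.filter (fun x => T x = (h - 1) + 1) := by
    intro x hx
    rw [Finset.mem_filter] at hx ⊢
    exact ⟨hx.1, by omega⟩
  calc h = F h := hFh.symm
    _ ≤ Ncnt D T (R + 1) h := hfin
    _ ≤ (D.filter (fun x => T x = (h - 1) + 1)).card := Finset.card_le_card hsub
    _ = ν.rowLen (h - 1) := hcount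

theorem stmt16 (lam mu : YoungDiagram) (hmu : mu ≤ lam) (h : ℕ)
    (hsq : ∃ r c : ℕ, ∀ a < h, ∀ b < h, (r + a, c + b) ∈ skewCells lam mu) :
    ∀ ν : YoungDiagram, lr lam mu ν ≠ 0 → h ≤ durfee ν := by
  intro ν hν
  rw [lr, skewCoeff] at hν
  obtain ⟨T, hT⟩ := Set.nonempty_of_ncard_ne_zero hν
  have hrl : h ≤ ν.rowLen (h - 1) := stmt16' lam mu h hsq ν T hT
  rcases Nat.eq_zero_or_pos h with rfl | hpos
  · exact Nat.zero_le _
  have hmem : ∀ i < h, ((i, i) : ℕ × ℕ) ∈ ν := by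
    intro i hi
    rw [YoungDiagram.mem_iff_lt_rowLen]
    have := ν.rowLen_anti i (h - 1) (by omega)
    omega
  have hcard : h ≤ ν.card := by
    have : (range h).card ≤ ν.cells.card := by
      apply Finset.card_le_card_of_injOn (fun i => ((i, i) : ℕ × ℕ))
      · intro i hi
        rw [Finset.mem_coe, YoungDiagram.mem_cells]
        exact hmem i (Finset.mem_range.mp hi)
      · intro a _ b _ hab
        simpa using hab
    simpa using this
  have hsub : range h ⊆ (Finset.range (ν.card + 1)).filter (fun i => (i, i) ∈ ν) := by
    intro i hi
    have hi' := Finset.mem_range.mp hi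
    rw [Finset.mem_filter, Finset.mem_range]
    exact ⟨by omega, hmem i hi'⟩
  calc h = (range h).card := (Finset.card_range h).symm
    _ ≤ _ := Finset.card_le_card hsub


end SkewHooks
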